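/- Let (G,X) be a minimal topological dynamical system and let d ≥ 1. Then the action of the Host–Kra cube group HK^[d] on C_G^[d](X) is minimal: C_G^[d](X) is HK^[d]-invariant and every HK^[d]-orbit in C_G^[d](X) is dense in C_G^[d](X). -/

import Mathlib

/-- Generators of the Host–Kra cube group: `[h]_F` for `F` a hyperface `{ω : ω i = a}`. -/
def hyperfaceGens (G : Type*) [Group G] (d : ℕ) : Set ((Fin d → Bool) → G) :=
  {g | ∃ (h : G) (i : Fin d) (a : Bool), g = fun ω => if ω i = a then h else 1}

/-- Generators of the face cube group: `[h]_F` for `F` an upper hyperface `{ω : ω i = 1}`. -/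
def upperFaceGens (G : Type*) [Group G] (d : ℕ) : Set ((Fin d → Bool) → G) :=
  {g | ∃ (h : G) (i : Fin d), g = fun ω => if ω i = true then h else 1}

/-- The Host–Kra cube group `HK^[d]`. -/
def HK (G : Type*) [Group G] (d : ℕ) : Subgroup ((Fin d → Bool) → G) :=
  Subgroup.closure (hyperfaceGens G d)

/-- The face cube group `F^[d]`. -/
def FG (G : Type*) [Group G] (d : ℕ) : Subgroup ((Fin d → Bool) → G) :=
  Subgroup.closure (upperFaceGens G d)

/-- Coordinatewise action of `G^[d]` on `X^[d]`. -/
def cubeAct {G X : Type*} [Group G] [MulAction G X] {d : ℕ}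
    (g : (Fin d → Bool) → G) (c : (Fin d → Bool) → X) : (Fin d → Bool) → X :=
  fun ω => g ω • c ω

/-- The dynamical cubespace `C_G^[d](X)`: the closure of the set of `HK^[d]`-translates
of constant configurations. -/
def cubeSpace (G X : Type*) [Group G] [MulAction G X] [TopologicalSpace X] (d : ℕ) :
    Set ((Fin d → Bool) → X) :=
  closure {c | ∃ g ∈ HK G d, ∃ x : X, c = cubeAct g (fun _ => x)}

/-- The lower corner `⌞^[d](x,y)`: value `y` at `1⃗`, value `x` elsewhere. -/
def lowerCorner {X : Type*} (d : ℕ) (x y : X) : (Fin d → Bool) → X :=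
  fun ω => if ω = (fun _ => true) then y else x

/-- The upper corner `⌝^[d](x,y)`: value `x` at `0⃗`, value `y` elsewhere. -/
def upperCorner {X : Type*} (d : ℕ) (x y : X) : (Fin d → Bool) → X :=
  fun ω => if ω = (fun _ => false) then x else y

/-- The nilpotent regionally proximal relation of order `d`. -/
def NRP (G X : Type*) [Group G] [MulAction G X] [TopologicalSpace X] (d : ℕ) :
    Set (X × X) :=
  {p | lowerCorner (d + 1) p.1 p.2 ∈ cubeSpace G X (d + 1)}

/-- `Y_x^[d](X)`: the closure of the `F^[d]`-orbit of the constant configuration `x^[d]`. -/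
def Yx (G : Type*) {X : Type*} [Group G] [MulAction G X] [TopologicalSpace X]
    (d : ℕ) (x : X) : Set ((Fin d → Bool) → X) :=
  closure {c | ∃ f ∈ FG G d, c = cubeAct f (fun _ => x)}

/-- `C_x^[d](X)`: cubes whose value at `0⃗` is `x`. -/
def Cx (G : Type*) {X : Type*} [Group G] [MulAction G X] [TopologicalSpace X]
    (d : ℕ) (x : X) : Set ((Fin d → Bool) → X) :=
  {c ∈ cubeSpace G X d | c (fun _ => false) = x}



/-! ### Auxiliary Ellis semigroup theory -/

open Set

/-- Composition as multiplication on self-maps. -/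
instance (priority := 100) instMulSelfFun {α : Type*} : Mul (α → α) := ⟨fun f g => f ∘ g⟩

instance (priority := 100) instSemigroupSelfFun {α : Type*} : Semigroup (α → α) :=
  { mul_assoc := fun _ _ _ => rfl }

lemma selfFun_mul_apply {α : Type*} (f g : α → α) (x : α) : (f * g) x = f (g x) := rfl

section EllisGeneral

variable {M : Type*} [Semigroup M] [TopologicalSpace M] [CompactSpace M] [T2Space M]

/-- The closure of a set closed under multiplication (with left multiplications by its
elements continuous) is closed under multiplication. -/
theorem ellis_closure_mul (hr : ∀ a : M, Continuous (· * a)) {s : Set M}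
    (hl : ∀ a ∈ s, Continuous (a * ·)) (hmul : ∀ a ∈ s, ∀ b ∈ s, a * b ∈ s)
    {p q : M} (hp : p ∈ closure s) (hq : q ∈ closure s) : p * q ∈ closure s := by
  have step1 : ∀ a ∈ s, ∀ r ∈ closure s, a * r ∈ closure s := by
    intro a ha r hrr
    have hm : MapsTo (a * ·) s (closure s) := fun b hb => subset_closure (hmul a ha b hb)
    simpa using hm.closure (hl a ha) hrr
  have hm2 : MapsTo (· * q) s (closure s) := fun b hb => step1 b hb q hq
  simpa using hm2.closure (hr q) hp

/-- Closed left ideals of a (sub)semigroup `E`. -/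
def IsCLIdeal (E I : Set M) : Prop :=
  I.Nonempty ∧ IsClosed I ∧ I ⊆ E ∧ ∀ p ∈ E, ∀ q ∈ I, p * q ∈ I

theorem exists_minimal_ideal {E I : Set M} (hI : IsCLIdeal E I) :
    ∃ L, IsCLIdeal E L ∧ L ⊆ I ∧ ∀ J, IsCLIdeal E J → J ⊆ L → J = L := by
  have hzorn : ∀ c ⊆ {J : Set M | IsCLIdeal E J}, IsChain (· ⊆ ·) c → c.Nonempty →
      ∃ lb ∈ {J : Set M | IsCLIdeal E J}, ∀ s ∈ c, lb ⊆ s := by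
    intro c hcS hchain hcne
    refine ⟨⋂₀ c, ⟨?_, ?_, ?_, ?_⟩, fun s hs => sInter_subset_of_mem hs⟩
    · haveI : Nonempty c := hcne.coe_sort
      exact IsCompact.nonempty_sInter_of_directed_nonempty_isCompact_isClosed
        (IsChain.directedOn hchain.symm) (fun U hU => (hcS hU).1)
        (fun U hU => (hcS hU).2.1.isCompact) (fun U hU => (hcS hU).2.1)
    · exact isClosed_sInter fun U hU => (hcS hU).2.1
    · obtain ⟨U, hU⟩ := hcne
      exact (sInter_subset_of_mem hU).trans (hcS hU).2.2.1
    · intro p hp q hq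
      exact mem_sInter.2 fun U hU => (hcS hU).2.2.2 p hp q (mem_sInter.1 hq U hU)
  obtain ⟨L, hLI, hL⟩ := zorn_superset_nonempty {J | IsCLIdeal E J} hzorn I hI
  exact ⟨L, hL.prop, hLI, fun J hJ hJL => subset_antisymm hJL (hL.2 hJ hJL)⟩

end EllisGeneral


/-- For a minimal t.d.s. `(G,X)`, the action of the Host–Kra cube group `HK^[d]` on
`C_G^[d](X)` is minimal: the cubespace is invariant and every orbit is dense in it. -/
theorem cubeSpace_HK_minimal
    {G X : Type*} [Group G] [TopologicalSpace G] [IsTopologicalGroup G]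
    [TopologicalSpace X] [CompactSpace X] [T2Space X]
    [MulAction G X] [ContinuousSMul G X]
    {d : ℕ} (hd : 1 ≤ d)
    (hmin : ∀ x : X, Dense (MulAction.orbit G x)) :
    (∀ g ∈ HK G d, ∀ c ∈ cubeSpace G X d, cubeAct g c ∈ cubeSpace G X d) ∧
    (∀ c ∈ cubeSpace G X d,
      cubeSpace G X d ⊆ closure {c' | ∃ g ∈ HK G d, c' = cubeAct g c}) := by
  classical
  rcases isEmpty_or_nonempty X with hX | hX
  · have he : cubeSpace G X d = ∅ := by
      have h0 : {c : (Fin d → Bool) → X | ∃ g ∈ HK G d, ∃ x : X, c = cubeAct g (fun _ => x)}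
          = ∅ := by
        ext c
        simp only [Set.mem_setOf_eq, Set.mem_empty_iff_false, iff_false]
        rintro ⟨g, -, x, -⟩
        exact (IsEmpty.false x)
      rw [cubeSpace, h0, closure_empty]
    constructor
    · intro g _ c hc
      rw [he] at hc
      exact absurd hc (Set.notMem_empty c)
    · intro c hc
      rw [he] at hc
      exact absurd hc (Set.notMem_empty c)
  -- main case
  obtain ⟨x⟩ := hX
  set ι : G → (X → X) := fun g => (g • ·) with hι
  set ιΩ : ((Fin d → Bool) → G) → ((Fin d → Bool) → X → X) := fun g ω => ι (g ω) with hιΩ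
  set E : Set (X → X) := closure (Set.range ι) with hE
  set S : Set ((Fin d → Bool) → X → X) := closure (ιΩ '' (HK G d : Set _)) with hS
  have hcont : ∀ g : G, Continuous (ι g) := fun g => continuous_const.smul continuous_id
  have hrPhi : ∀ a : X → X, Continuous (· * a) := fun a =>
    continuous_pi fun z => continuous_apply (a z)
  have hrPsi : ∀ a : (Fin d → Bool) → X → X, Continuous (· * a) := fun a =>
    continuous_pi fun ω => (hrPhi (a ω)).comp (continuous_apply ω)
  have hmulrange : ∀ a ∈ Set.range ι, ∀ b ∈ Set.range ι, a * b ∈ Set.range ι := by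
    rintro _ ⟨g, rfl⟩ _ ⟨g', rfl⟩
    exact ⟨g * g', by funext z; exact (mul_smul g g' z)⟩
  have hlrange : ∀ a ∈ Set.range ι, Continuous (a * ·) := by
    rintro _ ⟨g, rfl⟩
    exact continuous_pi fun z => (hcont g).comp (continuous_apply z)
  have hEmul : ∀ p ∈ E, ∀ q ∈ E, p * q ∈ E := fun p hp q hq =>
    ellis_closure_mul hrPhi hlrange hmulrange hp hq
  have hSmul : ∀ p ∈ S, ∀ q ∈ S, p * q ∈ S := by
    refine fun p hp q hq => ellis_closure_mul hrPsi ?_ ?_ hp hq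
    · rintro _ ⟨g, hg, rfl⟩
      exact continuous_pi fun ω => (hlrange _ ⟨g ω, rfl⟩).comp (continuous_apply ω)
    · rintro _ ⟨g, hg, rfl⟩ _ ⟨g', hg', rfl⟩
      refine ⟨g * g', mul_mem hg hg', ?_⟩
      funext ω z
      exact mul_smul (g ω) (g' ω) z
  have hSE : ∀ p ∈ S, ∀ ω, p ω ∈ E := by
    intro p hp ω
    have hm : Set.MapsTo (fun q : (Fin d → Bool) → X → X => q ω)
        (ιΩ '' (HK G d : Set _)) (Set.range ι) := by
      rintro _ ⟨g, hg, rfl⟩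
      exact ⟨g ω, rfl⟩
    exact hm.closure (continuous_apply ω) hp
  have hconst : ∀ h : G, (fun _ : Fin d → Bool => h) ∈ HK G d := by
    intro h
    have ha : (fun ω : Fin d → Bool => if ω ⟨0, hd⟩ = false then h else 1) ∈ HK G d :=
      Subgroup.subset_closure ⟨h, ⟨0, hd⟩, false, rfl⟩
    have hb : (fun ω : Fin d → Bool => if ω ⟨0, hd⟩ = true then h else 1) ∈ HK G d :=
      Subgroup.subset_closure ⟨h, ⟨0, hd⟩, true, rfl⟩
    have heq : (fun ω : Fin d → Bool => if ω ⟨0, hd⟩ = false then h else 1) *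
        (fun ω => if ω ⟨0, hd⟩ = true then h else 1) = fun _ => h := by
      funext ω
      rcases Bool.eq_false_or_eq_true (ω ⟨0, hd⟩) with h1 | h1 <;>
        simp [Pi.mul_apply, h1]
    have := mul_mem ha hb
    rwa [heq] at this
  have hdiag : ∀ p ∈ E, (fun _ : Fin d → Bool => p) ∈ S := by
    intro p hp
    have hm : Set.MapsTo (fun q : X → X => (fun _ : Fin d → Bool => q)) (Set.range ι)
        (ιΩ '' (HK G d : Set _)) := by
      rintro _ ⟨g, rfl⟩
      exact ⟨fun _ => g, hconst g, rfl⟩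
    exact hm.closure (continuous_pi fun _ => continuous_id) hp
  have horbX : ∀ K : Set X, K.Nonempty → IsClosed K →
      (∀ g : G, ∀ y ∈ K, g • y ∈ K) → ∀ z : X, z ∈ K := by
    rintro K ⟨y, hy⟩ hKc hKinv z
    have hsub : MulAction.orbit G y ⊆ K := by
      rintro _ ⟨g, rfl⟩
      exact hKinv g y hy
    have hcl : closure (MulAction.orbit G y) ⊆ K := hKc.closure_subset_iff.mpr hsub
    have := (hmin y).closure_eq
    rw [this] at hcl
    exact hcl (Set.mem_univ z)
  have hEx : ∀ z y : X, ∃ q ∈ E, q z = y := by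
    intro z y
    have hK : ∀ w : X, w ∈ (fun p : X → X => p z) '' E := by
      refine horbX _ ⟨z, ι 1, subset_closure ⟨1, rfl⟩, one_smul G z⟩
        ((isClosed_closure.isCompact.image (continuous_apply z)).isClosed) ?_
      rintro g _ ⟨p, hp, rfl⟩
      exact ⟨ι g * p, hEmul _ (subset_closure ⟨g, rfl⟩) _ hp, rfl⟩
    obtain ⟨q, hq, hqz⟩ := hK y
    exact ⟨q, hq, hqz⟩
  have hev : ∀ c : (Fin d → Bool) → X,
      Continuous fun p : (Fin d → Bool) → X → X => (fun ω => p ω (c ω)) :=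
    fun c => continuous_pi fun ω => (continuous_apply (c ω)).comp (continuous_apply ω)
  have hSclosed : IsClosed S := isClosed_closure
  have hScompact : IsCompact S := hSclosed.isCompact
  have hCsub : cubeSpace G X d ⊆ (fun p : (Fin d → Bool) → X → X => fun ω => p ω x) '' S := by
    refine closure_minimal ?_ ((hScompact.image (hev fun _ => x)).isClosed)
    rintro c ⟨g, hg, y, rfl⟩
    obtain ⟨q, hq, hqx⟩ := hEx x y
    refine ⟨ιΩ g * (fun _ => q), hSmul _ (subset_closure ⟨g, hg, rfl⟩) _ (hdiag q hq), ?_⟩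
    funext ω
    show (ι (g ω) * q) x = g ω • y
    rw [selfFun_mul_apply, hqx]
  have horb : ∀ c : (Fin d → Bool) → X,
      (fun p : (Fin d → Bool) → X → X => fun ω => p ω (c ω)) '' S ⊆
        closure {c' | ∃ g ∈ HK G d, c' = cubeAct g c} := by
    intro c
    have h1 := image_closure_subset_closure_image (s := ιΩ '' (HK G d : Set _)) (hev c)
    refine h1.trans (closure_mono ?_)
    rintro _ ⟨_, ⟨g, hg, rfl⟩, rfl⟩
    exact ⟨g, hg, rfl⟩
  -- a minimal closed left ideal of E and an idempotent fixing x
  have hEid : IsCLIdeal E E := ⟨⟨ι 1, subset_closure ⟨1, rfl⟩⟩, isClosed_closure, le_refl _, hEmul⟩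
  obtain ⟨L, hLid, -, hLmin⟩ := exists_minimal_ideal hEid
  have hpx : ∃ p ∈ L, p x = x := by
    have hK := horbX ((fun p : X → X => p x) '' L) (hLid.1.image _)
      ((hLid.2.1.isCompact.image (continuous_apply x)).isClosed) ?_ x
    · obtain ⟨p, hp, hpx⟩ := hK
      exact ⟨p, hp, hpx⟩
    · rintro g _ ⟨p, hp, rfl⟩
      exact ⟨ι g * p, hLid.2.2.2 _ (subset_closure ⟨g, rfl⟩) _ hp, rfl⟩
  have hGamul : ∀ a ∈ {p ∈ L | p x = x}, ∀ b ∈ {p ∈ L | p x = x}, a * b ∈ {p ∈ L | p x = x} := by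
    rintro a ⟨haL, hax⟩ b ⟨hbL, hbx⟩
    exact ⟨hLid.2.2.2 a (hLid.2.2.1 haL) b hbL, by rw [selfFun_mul_apply, hbx, hax]⟩
  have hGacl : IsClosed {p ∈ L | p x = x} :=
    hLid.2.1.inter (isClosed_eq (continuous_apply x) continuous_const)
  obtain ⟨u, huGa, huu⟩ := exists_idempotent_in_compact_subsemigroup hrPhi _
    (by obtain ⟨p, hp, hpeq⟩ := hpx; exact ⟨p, hp, hpeq⟩) hGacl.isCompact hGamul
  obtain ⟨huL, hux⟩ := huGa
  have huE : u ∈ E := hLid.2.2.1 huL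
  -- absorption lemma
  have habsorb : ∀ v ∈ E, v * v = v → v * u = v → u * v = u := by
    intro v hvE hvv hvu
    have hwE : u * v ∈ E := hEmul u huE v hvE
    have hwu : (u * v) * u = u * v := by rw [mul_assoc, hvu]
    have hwL : u * v ∈ L := by
      rw [← hwu]
      exact hLid.2.2.2 _ hwE _ huL
    have hww : (u * v) * (u * v) = u * v := by
      have h5 : v * (u * v) = v := by rw [← mul_assoc, hvu, hvv]
      rw [mul_assoc, h5]
    have hJid : IsCLIdeal E ((· * (u * v)) '' L) := by
      refine ⟨hLid.1.image _, (hLid.2.1.isCompact.image (hrPhi _)).isClosed, ?_, ?_⟩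
      · rintro _ ⟨p, hp, rfl⟩
        exact hLid.2.2.1 (hLid.2.2.2 p (hLid.2.2.1 hp) _ hwL)
      · rintro q hq _ ⟨p, hp, rfl⟩
        exact ⟨q * p, hLid.2.2.2 q hq p hp, (mul_assoc q p _).symm⟩
    have hJL : (· * (u * v)) '' L ⊆ L := by
      rintro _ ⟨p, hp, rfl⟩
      exact hLid.2.2.2 p (hLid.2.2.1 hp) _ hwL
    have hJeq := hLmin _ hJid hJL
    have huJ : u ∈ (· * (u * v)) '' L := by rw [hJeq]; exact huL
    obtain ⟨p, hpL, hpu'⟩ := huJ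
    have hpu : p * (u * v) = u := hpu'
    have h1 : u * (u * v) = u := by
      calc u * (u * v) = (p * (u * v)) * (u * v) := by rw [hpu]
        _ = p * ((u * v) * (u * v)) := by rw [mul_assoc]
        _ = p * (u * v) := by rw [hww]
        _ = u := hpu
    have h2 : u * (u * v) = u * v := by rw [← mul_assoc, huu]
    rw [← h2, h1]
  -- the diagonal idempotent belongs to a minimal left ideal of S
  have huDS : (fun _ : Fin d → Bool => u) ∈ S := hdiag u huE
  have huDD : (fun _ : Fin d → Bool => u) * (fun _ => u) = (fun _ : Fin d → Bool => u) := by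
    funext ω
    exact huu
  have hIid : IsCLIdeal S ((· * (fun _ : Fin d → Bool => u)) '' S) := by
    refine ⟨⟨_, _, huDS, rfl⟩, (hScompact.image (hrPsi _)).isClosed, ?_, ?_⟩
    · rintro _ ⟨p, hp, rfl⟩
      exact hSmul p hp _ huDS
    · rintro q hq _ ⟨p, hp, rfl⟩
      exact ⟨q * p, hSmul q hq p hp, (mul_assoc q p _).symm⟩
  obtain ⟨Lst, hLstid, hLstsub, hLstmin⟩ := exists_minimal_ideal hIid
  obtain ⟨v, hvLst, hvv⟩ := exists_idempotent_in_compact_subsemigroup hrPsi Lst hLstid.1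
    hLstid.2.1.isCompact (fun a ha b hb => hLstid.2.2.2 a (hLstid.2.2.1 ha) b hb)
  have hvuD : v * (fun _ : Fin d → Bool => u) = v := by
    obtain ⟨q, hq, hqv⟩ := hLstsub hvLst
    rw [← hqv, mul_assoc, huDD]
  have huDLst : (fun _ : Fin d → Bool => u) ∈ Lst := by
    have huv : (fun _ : Fin d → Bool => u) * v = (fun _ : Fin d → Bool => u) := by
      funext ω
      have h1 : v ω ∈ E := hSE v (hLstid.2.2.1 hvLst) ω
      have h2 : v ω * v ω = v ω := congrFun hvv ω
      have h3 : v ω * u = v ω := congrFun hvuD ω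
      exact habsorb (v ω) h1 h2 h3
    rw [← huv]
    exact hLstid.2.2.2 _ huDS v hvLst
  constructor
  · -- invariance
    intro g hg c hc
    have hcont2 : Continuous (cubeAct g : ((Fin d → Bool) → X) → (Fin d → Bool) → X) :=
      continuous_pi fun ω => continuous_const.smul (continuous_apply ω)
    have hm : Set.MapsTo (cubeAct g)
        {c | ∃ g' ∈ HK G d, ∃ y : X, c = cubeAct g' (fun _ => y)}
        {c | ∃ g' ∈ HK G d, ∃ y : X, c = cubeAct g' (fun _ => y)} := by
      rintro _ ⟨g', hg', y, rfl⟩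
      refine ⟨g * g', mul_mem hg hg', y, ?_⟩
      funext ω
      exact (mul_smul (g ω) (g' ω) y).symm
    exact hm.closure hcont2 hc
  · -- density of orbits
    intro c hc c'' hc''
    obtain ⟨p, hpS, hpc⟩ := hCsub hc
    have hJ0 : IsCLIdeal S ((· * (fun _ : Fin d → Bool => u)) '' ((· * p) '' S)) := by
      refine ⟨⟨_, _, ⟨_, huDS, rfl⟩, rfl⟩,
        (((hScompact.image (hrPsi p)).image (hrPsi _))).isClosed, ?_, ?_⟩
      · rintro _ ⟨_, ⟨w, hw, rfl⟩, rfl⟩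
        exact hSmul _ (hSmul w hw p hpS) _ huDS
      · rintro q hq _ ⟨_, ⟨w, hw, rfl⟩, rfl⟩
        exact ⟨q * (w * p), ⟨q * w, hSmul q hq w hw, (mul_assoc q w p).symm⟩,
          (mul_assoc q (w * p) _).symm⟩
    have hJ0sub : ((· * (fun _ : Fin d → Bool => u)) '' ((· * p) '' S)) ⊆ Lst := by
      rintro _ ⟨_, ⟨w, hw, rfl⟩, rfl⟩
      exact hLstid.2.2.2 _ (hSmul w hw p hpS) _ huDLst
    have hJ0eq := hLstmin _ hJ0 hJ0sub
    have huDJ : (fun _ : Fin d → Bool => u) ∈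
        (· * (fun _ : Fin d → Bool => u)) '' ((· * p) '' S) := hJ0eq ▸ huDLst
    obtain ⟨_, ⟨w, hwS, rfl⟩, hwp⟩ := huDJ
    have hfix : ∀ ω, (w * p) ω x = x := by
      intro ω
      have h1 : (w * p) ω * u = u := congrFun hwp ω
      calc (w * p) ω x = (w * p) ω (u x) := by rw [hux]
        _ = ((w * p) ω * u) x := rfl
        _ = u x := by rw [h1]
        _ = x := hux
    obtain ⟨r, hrS, hrc⟩ := hCsub hc''
    refine horb c ⟨r * w, hSmul r hrS w hwS, ?_⟩
    funext ω
    have hcω : c ω = p ω x := congrFun hpc.symm ω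
    calc (r * w) ω (c ω) = r ω (w ω (p ω x)) := by rw [hcω]; rfl
      _ = r ω ((w * p) ω x) := rfl
      _ = r ω x := by rw [hfix ω]
      _ = c'' ω := congrFun hrc ω
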